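/- Let $B_n$ be the $(n+1)\times n$ matrix whose upper $n\times n$ block is the tridiagonal Toeplitz matrix with $-2$ on the diagonal and $1$ on the adjacent diagonals, and whose last row is $(1,0,\ldots,0,1)$. Then $\det(B_n^\top B_n)=(n+1)^3$. -/

import Mathlib

open Matrix

noncomputable def T (n : ℕ) : Matrix (Fin n) (Fin n) ℝ :=
  Matrix.of fun i j => if (i:ℤ) = (j:ℤ) then -2 else if |(i:ℤ) - (j:ℤ)| = 1 then 1 else 0

lemma T_symm (n : ℕ) : (T n)ᵀ = T n := by
  ext i j
  simp only [T, transpose_apply, of_apply, abs_sub_comm ((i:ℤ)) (j:ℤ), eq_comm]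

lemma T_sub (n : ℕ) : (T (n+1)).submatrix Fin.succ Fin.succ = T n := by
  ext i j
  simp only [T, submatrix_apply, of_apply, Fin.val_succ]
  push_cast
  have h1 : ((i:ℤ) + 1 = (j:ℤ) + 1) ↔ ((i:ℤ) = j) := by omega
  have h2 : ((i:ℤ) + 1 - ((j:ℤ) + 1)) = (i:ℤ) - j := by ring
  rw [h2]
  simp [h1]

lemma det_T_rec (n : ℕ) : (T (n+2)).det = -2 * (T (n+1)).det - (T n).det := by
  rw [det_succ_row_zero]
  rw [Fin.sum_univ_succ, Fin.sum_univ_succ]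
  have hz : ∀ j : Fin n, (T (n+2)) 0 j.succ.succ = 0 := by
    intro j
    simp only [T, of_apply, Fin.val_succ, Fin.val_zero]
    push_cast
    have habs : |(0:ℤ) - ((j:ℤ)+1+1)| = (j:ℤ)+2 := by
      rw [abs_of_nonpos] <;> omega
    rw [if_neg (by omega), habs, if_neg (by omega)]
  simp only [hz, zero_smul, smul_zero, Finset.sum_const_zero, add_zero]
  have h00 : (T (n+2)) 0 0 = -2 := by simp [T]
  have h01 : (T (n+2)) 0 1 = 1 := by
    simp only [T, of_apply, Fin.val_zero, Fin.val_one]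
    norm_num
  rw [h00]
  have hA : ((0:Fin (n+2)).succAbove) = Fin.succ := by
    funext k; exact Fin.zero_succAbove k
  have hA1 : ((T (n+2)).submatrix Fin.succ ((0:Fin (n+2)).succAbove)).det = (T (n+1)).det := by
    rw [hA, T_sub]
  have hN : ((T (n+2)).submatrix Fin.succ ((Fin.succ 0 : Fin (n+2)).succAbove)).det = (T n).det := by
    set N := (T (n+2)).submatrix Fin.succ ((Fin.succ 0 : Fin (n+2)).succAbove) with hNdef
    rw [det_succ_column_zero, Fin.sum_univ_succ]
    have hone : (Fin.succ 0 : Fin (n+2)) = 1 := rfl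
    have hN00 : N 0 0 = 1 := by
      have : ((1:Fin (n+2)).succAbove 0) = 0 := rfl
      simp only [hNdef, submatrix_apply, hone, this]
      simp only [T, of_apply, Fin.val_succ, Fin.val_zero]
      norm_num
    have hNz : ∀ i : Fin n, N i.succ 0 = 0 := by
      intro i
      have : ((1:Fin (n+2)).succAbove 0) = 0 := rfl
      simp only [hNdef, submatrix_apply, hone, this]
      simp only [T, of_apply, Fin.val_succ, Fin.val_zero]
      push_cast
      have habs : |((i:ℤ)+1+1) - 0| = (i:ℤ)+2 := by
        rw [abs_of_nonneg] <;> omega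
      rw [if_neg (by omega), habs, if_neg (by omega)]
    simp only [hNz, smul_zero, mul_zero, zero_mul, Finset.sum_const_zero, add_zero]
    rw [hN00]
    have hcols : N.submatrix ((0:Fin (n+1)).succAbove) Fin.succ = T n := by
      ext i j
      simp only [hNdef, submatrix_apply, Fin.zero_succAbove]
      have hsa : ((Fin.succ 0:Fin (n+2)).succAbove j.succ) = j.succ.succ := by
        rw [hone, Fin.succAbove_of_le_castSucc]
        simp [Fin.le_def, Fin.val_succ]
      rw [hsa]
      simp only [T, of_apply, Fin.val_succ]
      push_cast
      have h2 : ((i:ℤ)+1+1 - ((j:ℤ)+1+1)) = (i:ℤ) - j := by ring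
      have h1 : ((i:ℤ)+1+1 = (j:ℤ)+1+1) ↔ ((i:ℤ)=j) := by omega
      rw [h2]
      simp [h1]
    rw [hcols]
    simp
  rw [hA1, hN]
  have hT01 : T (n+2) 0 (Fin.succ 0) = 1 := by
    simp only [T, of_apply, Fin.val_succ, Fin.val_zero]
    norm_num
  rw [hT01]
  simp
  ring

lemma det_T (n : ℕ) : (T n).det = (-1)^n * (n+1) := by
  induction n using Nat.twoStepInduction with
  | zero => simp
  | one => simp [Matrix.det_fin_one, T]; norm_num
  | more n ih1 ih2 => rw [det_T_rec, ih1, ih2]; push_cast; ring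

theorem stmt_3 (n : ℕ) (hn : 2 ≤ n)
    (B : Matrix (Fin (n + 1)) (Fin n) ℝ)
    (hB : ∀ i : Fin (n + 1), ∀ j : Fin n, B i j =
      if (i : ℤ) = (j : ℤ) then -2
      else if |(i : ℤ) - (j : ℤ)| = 1 then 1
      else if (i : ℕ) = n ∧ (j : ℕ) = 0 then 1
      else 0) :
    (Bᵀ * B).det = ((n : ℝ) + 1) ^ 3 := by
  set v : Fin n → ℝ := fun i =>
    (if (i:ℕ) = 0 then 1 else 0) + (if (i:ℕ)+1 = n then 1 else 0) with hvdef
  set u : Fin n → ℝ := fun _ => 1 with hudef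
  -- top rows of B are T n
  have htop : ∀ (k : Fin n) (i : Fin n), B k.castSucc i = T n k i := by
    intro k i
    rw [hB]
    simp only [T, of_apply, Fin.coe_castSucc]
    have : ¬ (((k.castSucc : Fin (n+1)):ℕ) = n ∧ (i:ℕ) = 0) := by
      simp only [Fin.coe_castSucc]
      intro h
      exact absurd h.1 (Nat.ne_of_lt k.isLt)
    simp only [Fin.coe_castSucc] at this ⊢
    split_ifs with h1 h2 <;> simp_all
  -- last row of B is v
  have hlast : ∀ i : Fin n, B (Fin.last n) i = v i := by
    intro i
    rw [hB]
    have hilt : (i:ℕ) < n := i.isLt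
    have habs : |(n:ℤ) - (i:ℤ)| = 1 ↔ ((i:ℕ)+1 = n) := by
      rw [abs_eq (by norm_num : (0:ℤ) ≤ 1)]
      omega
    simp only [Fin.val_last, hvdef, habs, eq_self_iff_true, true_and]
    split_ifs <;> first | (exfalso; omega) | norm_num | omega
  -- row sums of T
  have hv : T n *ᵥ u = -v := by
    funext i
    have hsplit : ∀ j : Fin n, T n i j =
        (if j = i then (-2:ℝ) else 0) + (if (j:ℕ) = (i:ℕ)+1 then 1 else 0)
          + (if (j:ℕ)+1 = (i:ℕ) then 1 else 0) := by
      intro j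
      simp only [T, of_apply]
      have habs : |(i:ℤ) - (j:ℤ)| = 1 ↔ ((i:ℤ) = (j:ℤ)+1 ∨ (j:ℤ) = (i:ℤ)+1) := by
        rw [abs_eq (by norm_num : (0:ℤ) ≤ 1)]
        omega
      have hfe : (j = i) ↔ ((j:ℕ) = (i:ℕ)) := Fin.ext_iff
      simp only [habs, hfe]
      split_ifs <;> first | (exfalso; omega) | norm_num | omega
    simp only [mulVec, dotProduct, hudef, mul_one]
    rw [Finset.sum_congr rfl (fun j _ => hsplit j)]
    rw [Finset.sum_add_distrib, Finset.sum_add_distrib]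
    have hs1 : ∑ j : Fin n, (if j = i then (-2:ℝ) else 0) = -2 := by simp
    have hs2 : ∑ j : Fin n, (if (j:ℕ) = (i:ℕ)+1 then (1:ℝ) else 0)
        = if (i:ℕ)+1 = n then 0 else 1 := by
      by_cases h : (i:ℕ)+1 = n
      · rw [if_pos h]
        apply Finset.sum_eq_zero
        intro j _
        rw [if_neg]
        have := j.isLt
        omega
      · rw [if_neg h]
        have hlt : (i:ℕ)+1 < n := by have := i.isLt; omega
        rw [Finset.sum_eq_single (⟨(i:ℕ)+1, hlt⟩ : Fin n)]
        · simp
        · intro j _ hj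
          rw [if_neg]
          intro hc
          exact hj (Fin.ext hc)
        · simp
    have hs3 : ∑ j : Fin n, (if (j:ℕ)+1 = (i:ℕ) then (1:ℝ) else 0)
        = if (i:ℕ) = 0 then 0 else 1 := by
      by_cases h : (i:ℕ) = 0
      · rw [if_pos h]
        apply Finset.sum_eq_zero
        intro j _
        rw [if_neg]
        omega
      · rw [if_neg h]
        have hlt : (i:ℕ)-1 < n := by have := i.isLt; omega
        rw [Finset.sum_eq_single (⟨(i:ℕ)-1, hlt⟩ : Fin n)]
        · rw [if_pos]
          simp only [Fin.val_mk]
          omega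
        · intro j _ hj
          rw [if_neg]
          intro hc
          apply hj
          apply Fin.ext
          simp only [Fin.val_mk]
          omega
        · simp
    rw [hs1, hs2, hs3]
    simp only [Pi.neg_apply, hvdef]
    have : ¬ ((i:ℕ) = 0 ∧ (i:ℕ)+1 = n) := by omega
    split_ifs with h1 h2 <;> first | norm_num | omega
  -- B^T B = T * T + col v * row v
  have hBB : Bᵀ * B = T n * T n + replicateCol Unit v * replicateRow Unit v := by
    ext i j
    simp only [Matrix.add_apply, mul_apply, transpose_apply]
    rw [Fin.sum_univ_castSucc]
    have h1 : ∑ k : Fin n, B k.castSucc i * B k.castSucc j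
        = ∑ k : Fin n, T n k i * T n k j := by
      apply Finset.sum_congr rfl
      intro k _
      rw [htop, htop]
    have h2 : ∑ k : Fin n, T n i k * T n k j = ∑ k : Fin n, T n k i * T n k j := by
      apply Finset.sum_congr rfl
      intro k _
      have : T n i k = T n k i := by
        have := congrFun (congrFun (T_symm n) i) k
        simpa [transpose_apply] using this.symm
      rw [this]
    rw [h1, hlast, hlast, h2]
    congr 1
    simp [replicateCol, replicateRow, mul_apply, Finset.univ_unique]
  have hcv : replicateCol Unit v * replicateRow Unit v = T n * (replicateCol Unit u * replicateRow Unit u) * T n := by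
    have h1 : replicateCol Unit v = -(T n * replicateCol Unit u) := by
      rw [← replicateCol_mulVec, hv]
      ext a b
      simp [replicateCol]
    have h2 : replicateRow Unit v = -(replicateRow Unit u * T n) := by
      have h := replicateRow_mulVec (ι := Unit) (T n) u
      rw [hv, transpose_mul, T_symm, transpose_replicateCol] at h
      have h5 : replicateRow Unit (-v) = -(replicateRow Unit v) := by ext a b; simp [replicateRow]
      rw [h5] at h
      rw [← neg_neg (replicateRow Unit v), h]
    rw [h1, h2]
    rw [Matrix.neg_mul, Matrix.mul_neg, neg_neg]
    simp only [Matrix.mul_assoc]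
  rw [hBB, hcv]
  have : T n * T n + T n * (replicateCol Unit u * replicateRow Unit u) * T n
      = T n * (1 + replicateCol Unit u * replicateRow Unit u) * T n := by
    noncomm_ring
  rw [this, det_mul, det_mul, det_one_add_replicateCol_mul_replicateRow, det_T]
  have hu : u ⬝ᵥ u = (n : ℝ) := by
    simp [dotProduct, hudef]
  rw [hu]
  have hsq : ((-1:ℝ)^n) * ((-1:ℝ)^n) = 1 := by
    rw [← pow_add, ← two_mul, pow_mul]
    norm_num
  have hfin : (-1:ℝ)^n * ((n:ℝ)+1) * (1 + (n:ℝ)) * ((-1:ℝ)^n * ((n:ℝ)+1))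
      = ((-1:ℝ)^n * (-1:ℝ)^n) * (((n:ℝ)+1)^3) := by ring
  rw [hfin, hsq, one_mul]
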